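/- Let E ⊆ ℝ^N and v : E → ℝ be measurable. If there exists a measurable function I : E → [0,∞) such that |v(x) − v(y)| ≤ (I(x) + I(y))|x − y| for every x, y ∈ E, then v is approximately differentiable at almost every point of E, and its approximate derivative satisfies |apD v| ≤ 2I almost everywhere in E. -/

import Mathlib

open MeasureTheory Metric Set Filter
open scoped ENNReal Topology

noncomputable section

/-- Approximate differentiability of `v` at `y` relative to the set `E`:
the set of points of `E` where the first-order Taylor error exceeds `ε ‖x - y‖`
has vanishing density at `y`. -/
def ApproxDerivWithin {N : ℕ} (v : EuclideanSpace ℝ (Fin N) → ℝ)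
    (E : Set (EuclideanSpace ℝ (Fin N))) (y : EuclideanSpace ℝ (Fin N))
    (L : EuclideanSpace ℝ (Fin N) →L[ℝ] ℝ) : Prop :=
  ∀ ε > (0 : ℝ),
    Tendsto
      (fun r : ℝ =>
        volume {x | x ∈ E ∩ ball y r ∧ ε * ‖x - y‖ < |v x - v y - L (x - y)|} /
          volume (ball y r))
      (𝓝[>] 0) (𝓝 0)

section Aux

variable {N : ℕ}

lemma vol_closedBall_eq_ball (y : EuclideanSpace ℝ (Fin N)) {r : ℝ} (hr : 0 < r) :
    volume (closedBall y r) = volume (ball y r) := by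
  refine le_antisymm ?_ (measure_mono ball_subset_closedBall)
  rw [← ball_union_sphere]
  refine le_trans (measure_union_le _ _) ?_
  rw [Measure.addHaar_sphere_of_ne_zero volume y hr.ne', add_zero]

lemma vol_cb_pos (y : EuclideanSpace ℝ (Fin N)) {r : ℝ} (hr : 0 < r) :
    0 < volume (closedBall y r) :=
  lt_of_lt_of_le (measure_ball_pos volume y hr) (measure_mono ball_subset_closedBall)

/-- key geometric lemma: a function vanishing on a set of full density with a derivative
has zero derivative. -/
lemma fderiv_eq_zero_of_eqOn_zero {h : EuclideanSpace ℝ (Fin N) → ℝ}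
    {y : EuclideanSpace ℝ (Fin N)} {S : Set (EuclideanSpace ℝ (Fin N))}
    {L : EuclideanSpace ℝ (Fin N) →L[ℝ] ℝ}
    (hy : h y = 0) (hS : ∀ x ∈ S, h x = 0) (hd : HasFDerivAt h L y)
    (hden : Tendsto (fun r => volume (Sᶜ ∩ closedBall y r) / volume (closedBall y r))
      (𝓝[>] 0) (𝓝 0)) : L = 0 := by
  rcases subsingleton_or_nontrivial (EuclideanSpace ℝ (Fin N)) with hsub | hnt
  · ext z
    have : z = 0 := Subsingleton.elim z 0
    simp [this]
  have hnorm : ∀ ε > (0:ℝ), ‖L‖ ≤ ε := by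
    intro ε hε
    -- choose δ
    set δ : ℝ := min 1 (ε / (2 + ‖L‖)) with hδdef
    have hL0 : (0:ℝ) ≤ ‖L‖ := norm_nonneg _
    have hδpos : 0 < δ := lt_min one_pos (div_pos hε (by linarith))
    have hδ1 : δ ≤ 1 := min_le_left _ _
    have hδε : δ * (1 + δ) + ‖L‖ * δ ≤ ε := by
      have h2 : δ ≤ ε / (2 + ‖L‖) := min_le_right _ _
      have h3 : δ * (2 + ‖L‖) ≤ ε := by
        rw [ ← le_div_iff₀ (by linarith : (0:ℝ) < 2 + ‖L‖)]; exact h2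
      nlinarith
    -- little-o estimate
    have hlo : ∀ᶠ x in 𝓝 y, ‖h x - h y - L (x - y)‖ ≤ δ * ‖x - y‖ :=
      hd.isLittleO.def hδpos
    rw [Metric.eventually_nhds_iff] at hlo
    obtain ⟨r0, hr0, hlo⟩ := hlo
    -- density estimate
    set κ : ℝ≥0∞ := ENNReal.ofReal ((δ / (1 + δ)) ^ N) with hκdef
    have hκpos : 0 < κ := by
      apply ENNReal.ofReal_pos.2
      positivity
    have hev : ∀ᶠ r in 𝓝[>] (0:ℝ),
        volume (Sᶜ ∩ closedBall y r) / volume (closedBall y r) < κ :=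
      hden.eventually_lt_const hκpos
    have hIoo : Ioo (0:ℝ) r0 ∈ 𝓝[>] (0:ℝ) := Ioo_mem_nhdsGT_of_mem ⟨le_refl 0, hr0⟩
    obtain ⟨r, hrκ, hrIoo⟩ := (hev.and (eventually_of_mem hIoo (fun _ h => h))).exists
    have hrpos : 0 < r := hrIoo.1
    have hrr0 : r < r0 := hrIoo.2
    set t : ℝ := r / (1 + δ) with htdef
    have htpos : 0 < t := div_pos hrpos (by linarith)
    have htr : (1 + δ) * t = r := by
      rw [htdef, mul_comm]; exact div_mul_cancel₀ r (ne_of_gt (by linarith : (0:ℝ) < 1 + δ))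
    -- key unit-vector estimate
    have key : ∀ u : EuclideanSpace ℝ (Fin N), ‖u‖ = 1 → |L u| ≤ ε := by
      intro u hu
      set p := y + t • u with hpdef
      have hppos : 0 < δ * t := mul_pos hδpos htpos
      have hsub : ball p (δ * t) ⊆ closedBall y r := by
        intro w hw
        rw [mem_ball] at hw
        rw [mem_closedBall]
        have hpy : dist p y = t := by
          rw [hpdef, dist_eq_norm, add_sub_cancel_left, norm_smul, hu, mul_one,
            Real.norm_eq_abs, abs_of_pos htpos]
        calc dist w y ≤ dist w p + dist p y := dist_triangle _ _ _
          _ ≤ δ * t + t := by rw [hpy]; linarith [hw.le]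
          _ = (1 + δ) * t := by ring
          _ = r := htr
      have hvol : volume (ball p (δ * t)) = κ * volume (closedBall y r) := by
        rw [Measure.addHaar_ball_of_pos volume p hppos,
          Measure.addHaar_closedBall volume y hrpos.le, finrank_euclideanSpace_fin,
          hκdef, ← mul_assoc, ← ENNReal.ofReal_mul (by positivity), ← mul_pow]
        congr 2
        rw [htdef]
        field_simp
      -- find a point of S in the small ball
      have hnonempty : (S ∩ ball p (δ * t)).Nonempty := by
        by_contra hcon
        rw [not_nonempty_iff_eq_empty] at hcon
        have hsub2 : ball p (δ * t) ⊆ Sᶜ ∩ closedBall y r := by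
          intro w hw
          refine ⟨fun hwS => ?_, hsub hw⟩
          exact absurd (Set.mem_inter hwS hw) (by rw [hcon]; exact id)
        have h1 : volume (ball p (δ * t)) ≤ volume (Sᶜ ∩ closedBall y r) :=
          measure_mono hsub2
        have h2 : volume (Sᶜ ∩ closedBall y r) < κ * volume (closedBall y r) := by
          rw [ENNReal.div_lt_iff (Or.inl (vol_cb_pos y hrpos).ne')
            (Or.inl measure_closedBall_lt_top.ne)] at hrκ
          exact hrκ
        rw [← hvol] at h2
        exact absurd (lt_of_le_of_lt h1 h2) (lt_irrefl _)
      obtain ⟨x, hxS, hxball⟩ := hnonempty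
      have hxy : dist x y ≤ r := hsub hxball
      have hxy0 : dist x y < r0 := lt_of_le_of_lt hxy hrr0
      have hest : ‖h x - h y - L (x - y)‖ ≤ δ * ‖x - y‖ := hlo hxy0
      rw [hS x hxS, hy, sub_zero, zero_sub, norm_neg] at hest
      have hxynorm : ‖x - y‖ ≤ (1 + δ) * t := by
        rw [← dist_eq_norm, htr]; exact hxy
      have hLxy : ‖L (x - y)‖ ≤ δ * ((1 + δ) * t) := by
        refine le_trans hest ?_
        exact mul_le_mul_of_nonneg_left hxynorm hδpos.le
      have hxp : ‖x - p‖ < δ * t := by rw [← dist_eq_norm]; exact hxball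
      have hdiff : L (x - y) - t * L u = L (x - p) := by
        have h1 : x - p = (x - y) - t • u := by rw [hpdef]; abel
        have h2 : L ((x - y) - t • u) = L (x - y) - t * L u := by
          rw [map_sub, L.map_smul, smul_eq_mul]
        rw [h1, h2]
      have hLxp : ‖L (x - p)‖ ≤ ‖L‖ * (δ * t) :=
        le_trans (L.le_opNorm _) (mul_le_mul_of_nonneg_left hxp.le (norm_nonneg L))
      have htLu : |t * L u| ≤ δ * ((1 + δ) * t) + ‖L‖ * (δ * t) := by
        have : t * L u = L (x - y) - (L (x - y) - t * L u) := by ring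
        rw [this]
        calc |L (x - y) - (L (x - y) - t * L u)|
            ≤ |L (x - y)| + |L (x - y) - t * L u| := abs_sub _ _
          _ ≤ δ * ((1 + δ) * t) + ‖L‖ * (δ * t) := by
              rw [hdiff]
              exact add_le_add hLxy hLxp
      have habs : |t * L u| = t * |L u| := by rw [abs_mul, abs_of_pos htpos]
      have h5 : t * |L u| ≤ t * (δ * (1 + δ) + ‖L‖ * δ) := by
        rw [← habs]
        calc |t * L u| ≤ δ * ((1 + δ) * t) + ‖L‖ * (δ * t) := htLu
          _ = t * (δ * (1 + δ) + ‖L‖ * δ) := by ring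
      have h6 := le_of_mul_le_mul_left h5 htpos
      linarith
    refine L.opNorm_le_bound hε.le (fun z => ?_) 
    rcases eq_or_ne z 0 with rfl | hz
    · simp
    · have hznorm : (0:ℝ) < ‖z‖ := norm_pos_iff.2 hz
      set u := ‖z‖⁻¹ • z with hudef
      have hu : ‖u‖ = 1 := by
        rw [hudef, norm_smul, norm_inv, norm_norm, inv_mul_cancel₀ hznorm.ne']
      have hLz : L z = ‖z‖ * L u := by
        rw [hudef, L.map_smul, smul_eq_mul, ← mul_assoc, mul_inv_cancel₀ hznorm.ne', one_mul]
      rw [Real.norm_eq_abs, hLz, abs_mul, abs_of_pos hznorm, mul_comm]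
      exact mul_le_mul_of_nonneg_right (key u hu) hznorm.le
  have : ‖L‖ ≤ 0 := le_of_forall_pos_le_add (fun ε hε => by simpa using hnorm ε hε)
  exact norm_le_zero_iff.1 this


lemma approxDeriv_of_agree {E S : Set (EuclideanSpace ℝ (Fin N))}
    {y : EuclideanSpace ℝ (Fin N)} (hyS : y ∈ S)
    {v g : EuclideanSpace ℝ (Fin N) → ℝ} (hEq : EqOn v g S)
    {L : EuclideanSpace ℝ (Fin N) →L[ℝ] ℝ} (hg : HasFDerivAt g L y)
    (hden : Tendsto (fun r => volume ((E \ S) ∩ closedBall y r) / volume (closedBall y r))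
      (𝓝[>] 0) (𝓝 0)) :
    ApproxDerivWithin v E y L := by
  intro ε hε
  have hlo : ∀ᶠ x in 𝓝 y, ‖g x - g y - L (x - y)‖ ≤ ε * ‖x - y‖ := hg.isLittleO.def hε
  rw [Metric.eventually_nhds_iff] at hlo
  obtain ⟨r0, hr0, hlo⟩ := hlo
  apply tendsto_of_tendsto_of_tendsto_of_le_of_le' tendsto_const_nhds hden
  · exact Eventually.of_forall (fun r => zero_le)
  · filter_upwards [Ioo_mem_nhdsGT_of_mem ⟨le_refl (0:ℝ), hr0⟩] with r hr
    have hrpos : 0 < r := hr.1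
    have hsub : {x | x ∈ E ∩ ball y r ∧ ε * ‖x - y‖ < |v x - v y - L (x - y)|}
        ⊆ (E \ S) ∩ closedBall y r := by
      rintro x ⟨⟨hxE, hxball⟩, hxbad⟩
      refine ⟨⟨hxE, fun hxS => ?_⟩, ball_subset_closedBall hxball⟩
      have hdxy : dist x y < r0 := lt_trans (mem_ball.1 hxball) hr.2
      have hb := hlo hdxy
      rw [← hEq hxS, ← hEq hyS, Real.norm_eq_abs] at hb
      linarith
    calc volume {x | x ∈ E ∩ ball y r ∧ ε * ‖x - y‖ < |v x - v y - L (x - y)|}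
          / volume (ball y r)
        = volume {x | x ∈ E ∩ ball y r ∧ ε * ‖x - y‖ < |v x - v y - L (x - y)|}
          / volume (closedBall y r) := by rw [vol_closedBall_eq_ball y hrpos]
      _ ≤ volume ((E \ S) ∩ closedBall y r) / volume (closedBall y r) :=
          ENNReal.div_le_div_right (measure_mono hsub) _

end Aux

/-- a Lipschitz-type estimate with variable coefficient implies
approximate differentiability almost everywhere, with `|apD v| ≤ 2 I` a.e. on `E`. -/
theorem stmt0 {N : ℕ} (E : Set (EuclideanSpace ℝ (Fin N))) (hE : MeasurableSet E)
    (v I : EuclideanSpace ℝ (Fin N) → ℝ)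
    (hv : Measurable (E.restrict v)) (hI : Measurable (E.restrict I))
    (hI0 : ∀ x ∈ E, 0 ≤ I x)
    (hlip : ∀ x ∈ E, ∀ y ∈ E, |v x - v y| ≤ (I x + I y) * ‖x - y‖) :
    ∀ᵐ y ∂(volume.restrict E),
      ∃ L : EuclideanSpace ℝ (Fin N) →L[ℝ] ℝ,
        ApproxDerivWithin v E y L ∧ ‖L‖ ≤ 2 * I y := by
  set S : ℚ → Set (EuclideanSpace ℝ (Fin N)) := fun q => {x | x ∈ E ∧ I x ≤ (q : ℝ)} with hSdef
  have hSmeas : ∀ q : ℚ, MeasurableSet (S q) := by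
    intro q
    have heq : S q = (↑) '' (E.restrict I ⁻¹' Iic (q : ℝ)) := by
      ext x
      constructor
      · rintro ⟨hxE, hxI⟩
        exact ⟨⟨x, hxE⟩, hxI, rfl⟩
      · rintro ⟨a, ha, rfl⟩
        exact ⟨a.2, ha⟩
    rw [heq]
    exact (MeasurableEmbedding.subtype_coe hE).measurableSet_image.2
      (hI measurableSet_Iic)
  have hSsubE : ∀ q : ℚ, S q ⊆ E := fun q x hx => hx.1
  have hSmono : ∀ q q' : ℚ, q ≤ q' → S q ⊆ S q' := by
    intro q q' hqq' x hx
    exact ⟨hx.1, le_trans hx.2 (by exact_mod_cast hqq')⟩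
  have hlipS : ∀ q : ℚ, LipschitzOnWith (Real.toNNReal (2 * q)) v (S q) := by
    intro q
    apply LipschitzOnWith.of_dist_le_mul
    intro x hx z hz
    have hq0 : (0 : ℝ) ≤ 2 * (q : ℝ) := by
      have := hI0 x hx.1
      linarith [hx.2]
    rw [Real.coe_toNNReal _ (by exact_mod_cast hq0), Real.dist_eq, dist_eq_norm]
    calc |v x - v z| ≤ (I x + I z) * ‖x - z‖ := hlip x hx.1 z hz.1
      _ ≤ 2 * (q : ℝ) * ‖x - z‖ := by
          apply mul_le_mul_of_nonneg_right _ (norm_nonneg _)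
          linarith [hx.2, hz.2]
  choose g hg hgeq using fun q : ℚ => (hlipS q).extend_real
  have hdiff : ∀ᵐ y ∂(volume : Measure (EuclideanSpace ℝ (Fin N))),
      ∀ q : ℚ, DifferentiableAt ℝ (g q) y :=
    ae_all_iff.2 fun q => (hg q).ae_differentiableAt
  have hdens : ∀ᵐ y ∂(volume : Measure (EuclideanSpace ℝ (Fin N))), ∀ q : ℚ,
      Tendsto (fun r => volume ((E \ S q) ∩ closedBall y r) / volume (closedBall y r))
        (𝓝[>] 0) (𝓝 ((E \ S q).indicator 1 y)) :=
    ae_all_iff.2 fun q => Besicovitch.ae_tendsto_measure_inter_div_of_measurableSet _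
      (hE.diff (hSmeas q))
  have hdensE : ∀ᵐ y ∂(volume : Measure (EuclideanSpace ℝ (Fin N))),
      Tendsto (fun r => volume (Eᶜ ∩ closedBall y r) / volume (closedBall y r))
        (𝓝[>] 0) (𝓝 (Eᶜ.indicator 1 y)) :=
    Besicovitch.ae_tendsto_measure_inter_div_of_measurableSet _ hE.compl
  filter_upwards [ae_restrict_of_ae hdiff, ae_restrict_of_ae hdens, ae_restrict_of_ae hdensE,
    ae_restrict_mem hE] with y hdiffy hdensy hdensEy hyE
  have hIy0 : 0 ≤ I y := hI0 y hyE
  -- chosen rationals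
  obtain ⟨q0, hq0⟩ := exists_rat_gt (I y)
  have hySq0 : y ∈ S q0 := ⟨hyE, hq0.le⟩
  set L := fderiv ℝ (g q0) y with hLdef
  -- density-zero facts
  have hdenq : ∀ q : ℚ, I y ≤ (q : ℝ) →
      Tendsto (fun r => volume ((E \ S q) ∩ closedBall y r) / volume (closedBall y r))
        (𝓝[>] 0) (𝓝 0) := by
    intro q hq
    have hnot : y ∉ E \ S q := fun hmem => hmem.2 ⟨hyE, hq⟩
    have h0 : (E \ S q).indicator (1 : EuclideanSpace ℝ (Fin N) → ℝ≥0∞) y = 0 :=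
      indicator_of_notMem hnot _
    have := hdensy q
    rwa [h0] at this
  have hdenE0 : Tendsto (fun r => volume (Eᶜ ∩ closedBall y r) / volume (closedBall y r))
      (𝓝[>] 0) (𝓝 0) := by
    have hnot : y ∉ Eᶜ := fun h => h hyE
    have h0 : Eᶜ.indicator (1 : EuclideanSpace ℝ (Fin N) → ℝ≥0∞) y = 0 :=
      indicator_of_notMem hnot _
    have := hdensEy
    rwa [h0] at this
  refine ⟨L, ?_, ?_⟩
  · exact approxDeriv_of_agree hySq0 (hgeq q0) (hdiffy q0).hasFDerivAt (hdenq q0 hq0.le)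
  · -- norm bound
    have hLe : ∀ q1 : ℚ, I y < (q1 : ℝ) → ‖L‖ ≤ 2 * (q1 : ℝ) := by
      intro q1 hq1
      set q' : ℚ := min q1 q0 with hq'def
      have hq' : I y < (q' : ℝ) := by
        rw [hq'def, Rat.cast_min]
        exact lt_min hq1 hq0
      have hySq' : y ∈ S q' := ⟨hyE, hq'.le⟩
      have hsub' : S q' ⊆ S q0 := hSmono _ _ (min_le_right _ _)
      -- complement density zero
      have hdenc : Tendsto (fun r => volume ((S q')ᶜ ∩ closedBall y r) / volume (closedBall y r))
          (𝓝[>] 0) (𝓝 0) := by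
        have hadd : Tendsto (fun r =>
            volume ((E \ S q') ∩ closedBall y r) / volume (closedBall y r) +
            volume (Eᶜ ∩ closedBall y r) / volume (closedBall y r)) (𝓝[>] 0) (𝓝 0) := by
          simpa using Filter.Tendsto.add (hdenq q' hq'.le) hdenE0
        apply tendsto_of_tendsto_of_tendsto_of_le_of_le' tendsto_const_nhds hadd
        · exact Eventually.of_forall (fun r => zero_le)
        · refine Eventually.of_forall (fun r => ?_)
          have hcompl : (S q')ᶜ ∩ closedBall y r ⊆
              ((E \ S q') ∩ closedBall y r) ∪ (Eᶜ ∩ closedBall y r) := by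
            rintro x ⟨hxc, hxb⟩
            by_cases hxE : x ∈ E
            · exact Or.inl ⟨⟨hxE, hxc⟩, hxb⟩
            · exact Or.inr ⟨hxE, hxb⟩
          calc volume ((S q')ᶜ ∩ closedBall y r) / volume (closedBall y r)
              ≤ (volume ((E \ S q') ∩ closedBall y r) + volume (Eᶜ ∩ closedBall y r)) /
                volume (closedBall y r) :=
                ENNReal.div_le_div_right
                  (le_trans (measure_mono hcompl) (measure_union_le _ _)) _
            _ = volume ((E \ S q') ∩ closedBall y r) / volume (closedBall y r) +
                volume (Eᶜ ∩ closedBall y r) / volume (closedBall y r) := ENNReal.add_div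
      -- apply key lemma
      have hdsub : HasFDerivAt (fun x => g q0 x - g q' x) (L - fderiv ℝ (g q') y) y :=
        ((hdiffy q0).hasFDerivAt).sub ((hdiffy q').hasFDerivAt)
      have hzero : L - fderiv ℝ (g q') y = 0 := by
        apply fderiv_eq_zero_of_eqOn_zero (S := S q') _ _ hdsub hdenc
        · rw [← hgeq q0 hySq0, ← hgeq q' hySq', sub_self]
        · intro x hx
          rw [← hgeq q0 (hsub' hx), ← hgeq q' hx, sub_self]
      have hLL' : L = fderiv ℝ (g q') y := sub_eq_zero.1 hzero
      have hnorm' : ‖fderiv ℝ (g q') y‖ ≤ (Real.toNNReal (2 * q') : ℝ) :=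
        norm_fderiv_le_of_lipschitz ℝ (hg q')
      have hc : (Real.toNNReal (2 * (q' : ℝ)) : ℝ) = 2 * (q' : ℝ) :=
        Real.coe_toNNReal _ (by linarith)
      rw [hLL']
      refine le_trans hnorm' ?_
      rw [hc]
      have hqle : (q' : ℝ) ≤ (q1 : ℝ) := by exact_mod_cast min_le_left q1 q0
      linarith
    by_contra hcon
    push_neg at hcon
    obtain ⟨q1, hq1a, hq1b⟩ := exists_rat_btwn (show I y < ‖L‖ / 2 by linarith)
    have := hLe q1 hq1a
    linarith
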